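/- arXiv:1612.03871 — 2 statements merged into one kernel-verified Lean document; each statement's English description precedes it below -/
import Mathlib

section
/- Let F be a monotone nondecreasing submodular set function on subsets of a finite ground set L with F(∅) = 0, and let B ≤ |L| be a budget. The greedy algorithm that starts from the empty set and at each of B steps adds the element with the largest marginal gain produces a set Ĝ with F(Ĝ) ≥ (1 − 1/e) · max{F(S) : S ⊆ L, |S| = B}. In fact, after k greedy steps, F(Ĝ_k) ≥ (1 − (1 − 1/B)^k) · OPT, where OPT is the optimal value over sets of size B. -/
open Finset

lemma greedy_aux_sum {α : Type*} [DecidableEq α]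
    (L : Finset α) (F : Finset α → ℝ)
    (hmono : ∀ A B : Finset α, A ⊆ B → B ⊆ L → F A ≤ F B)
    (hsub : ∀ A B : Finset α, A ⊆ B → B ⊆ L → ∀ x ∈ L \ B,
      F (insert x A) - F A ≥ F (insert x B) - F B) :
    ∀ T : Finset α, T ⊆ L → ∀ A : Finset α, A ⊆ L →
      F (A ∪ T) ≤ F A + ∑ x ∈ T \ A, (F (insert x A) - F A) := by
  intro T
  induction T using Finset.induction_on with
  | empty => intro _ A hA; simp
  | @insert y T' hy ih =>
    intro hT A hA
    have hyL : y ∈ L := hT (Finset.mem_insert_self _ _)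
    have hT'L : T' ⊆ L := (Finset.subset_insert y T').trans hT
    by_cases hyA : y ∈ A
    · have h1 : A ∪ insert y T' = A ∪ T' := by
        ext z; simp only [Finset.mem_union, Finset.mem_insert]
        constructor
        · rintro (h | rfl | h) <;> simp [*]
        · rintro (h | h) <;> simp [*]
      have h2 : insert y T' \ A = T' \ A := Finset.insert_sdiff_of_mem _ hyA
      rw [h1, h2]; exact ih hT'L A hA
    · have hyAT : y ∉ A ∪ T' := by simp [hyA, hy]
      have h1 : A ∪ insert y T' = insert y (A ∪ T') := Finset.union_insert _ _ _
      have h2 : insert y T' \ A = insert y (T' \ A) := by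
        ext z; simp only [Finset.mem_sdiff, Finset.mem_insert]
        constructor
        · rintro ⟨h | h, hz⟩
          · exact Or.inl h
          · exact Or.inr ⟨h, hz⟩
        · rintro (rfl | ⟨h, hz⟩)
          · exact ⟨Or.inl rfl, hyA⟩
          · exact ⟨Or.inr h, hz⟩
      have hynT : y ∉ T' \ A := fun h => hy (Finset.mem_sdiff.mp h).1
      rw [h1, h2, Finset.sum_insert hynT]
      have hsubst := hsub A (A ∪ T') Finset.subset_union_left
        (Finset.union_subset hA hT'L) y (Finset.mem_sdiff.mpr ⟨hyL, hyAT⟩)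
      have hih := ih hT'L A hA
      linarith

theorem greedy_guarantee {α : Type*} [DecidableEq α]
    (L : Finset α) (F : Finset α → ℝ)
    (hmono : ∀ A B : Finset α, A ⊆ B → B ⊆ L → F A ≤ F B)
    (hsub : ∀ A B : Finset α, A ⊆ B → B ⊆ L → ∀ x ∈ L \ B,
      F (insert x A) - F A ≥ F (insert x B) - F B)
    (hempty : F ∅ = 0)
    (B : ℕ) (hBpos : 0 < B) (hBle : B ≤ L.card)
    (G : ℕ → Finset α) (hG0 : G 0 = ∅) (hGsub : ∀ k, G k ⊆ L)
    (hgreedy : ∀ k < B, ∃ l ∈ L \ G k,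
      G (k + 1) = insert l (G k) ∧
      ∀ l' ∈ L \ G k, F (insert l (G k)) - F (G k) ≥ F (insert l' (G k)) - F (G k)) :
    (∀ S : Finset α, S ⊆ L → S.card = B →
        (∀ k ≤ B, F (G k) ≥ (1 - (1 - 1 / (B : ℝ)) ^ k) * F S) ∧
        F (G B) ≥ (1 - 1 / Real.exp 1) * F S) := by
  intro S hS hScard
  have hBR : (0:ℝ) < (B:ℝ) := by exact_mod_cast hBpos
  have hB1 : (1:ℝ) ≤ (B:ℝ) := by exact_mod_cast hBpos
  have hq : (0:ℝ) ≤ 1 - 1/(B:ℝ) := by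
    have : 1/(B:ℝ) ≤ 1 := by
      rw [div_le_one hBR]; exact hB1
    linarith
  have hFS0 : 0 ≤ F S := by
    have := hmono ∅ S (Finset.empty_subset _) hS
    linarith [hempty ▸ this]
  -- key recurrence
  have key : ∀ k < B, F S - F (G (k+1)) ≤ (1 - 1/(B:ℝ)) * (F S - F (G k)) := by
    intro k hk
    obtain ⟨l, hl, hG1, hmax⟩ := hgreedy k hk
    set g := F (G (k+1)) - F (G k) with hg
    have hlL : l ∈ L := (Finset.mem_sdiff.mp hl).1
    have hgain : g = F (insert l (G k)) - F (G k) := by rw [hg, hG1]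
    have hg0 : 0 ≤ g := by
      rw [hgain]
      have := hmono (G k) (insert l (G k)) (Finset.subset_insert _ _)
        (Finset.insert_subset hlL (hGsub k))
      linarith
    have hsum := greedy_aux_sum L F hmono hsub S hS (G k) (hGsub k)
    have hFSle : F S ≤ F (G k ∪ S) :=
      hmono S _ Finset.subset_union_right (Finset.union_subset (hGsub k) hS)
    have hterm : ∀ x ∈ S \ G k, F (insert x (G k)) - F (G k) ≤ g := by
      intro x hx
      have hx' : x ∈ L \ G k := Finset.mem_sdiff.mpr
        ⟨hS (Finset.mem_sdiff.mp hx).1, (Finset.mem_sdiff.mp hx).2⟩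
      rw [hgain]; exact hmax x hx'
    have hsumle := Finset.sum_le_card_nsmul (S \ G k) _ g hterm
    simp only [nsmul_eq_mul] at hsumle
    have hcard : ((S \ G k).card : ℝ) ≤ (B:ℝ) := by
      have : (S \ G k).card ≤ S.card := Finset.card_le_card (Finset.sdiff_subset)
      exact_mod_cast hScard ▸ this
    have hcardg : ((S \ G k).card : ℝ) * g ≤ (B:ℝ) * g :=
      mul_le_mul_of_nonneg_right hcard hg0
    have hmain : F S ≤ F (G k) + (B:ℝ) * g := by
      have : ((S \ G k).card : ℝ) * g = (S \ G k).card • g := by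
        simp [nsmul_eq_mul]
      linarith [hsum, hsumle, this ▸ hcardg]
    -- F S - F(G k) ≤ B * g  ⟹  (F S - F(G k))/B ≤ g
    have hdiv : (F S - F (G k)) / (B:ℝ) ≤ g := by
      rw [div_le_iff₀ hBR]; linarith [mul_comm g (B:ℝ)]
    have hexp : (1 - 1/(B:ℝ)) * (F S - F (G k))
        = (F S - F (G k)) - (F S - F (G k)) / (B:ℝ) := by
      field_simp
    rw [hexp]
    have : F S - F (G (k+1)) = (F S - F (G k)) - g := by rw [hg]; ring
    linarith
  -- induction
  have main : ∀ k ≤ B, F S - F (G k) ≤ (1 - 1/(B:ℝ))^k * F S := by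
    intro k
    induction k with
    | zero => intro _; simp [hG0, hempty]
    | succ n ih =>
      intro hn
      have hnB : n < B := Nat.lt_of_succ_le hn
      have h1 := key n hnB
      have h2 := ih (Nat.le_of_lt hnB)
      calc F S - F (G (n+1)) ≤ (1 - 1/(B:ℝ)) * (F S - F (G n)) := h1
        _ ≤ (1 - 1/(B:ℝ)) * ((1 - 1/(B:ℝ))^n * F S) :=
            mul_le_mul_of_nonneg_left h2 hq
        _ = (1 - 1/(B:ℝ))^(n+1) * F S := by ring
  have conc : ∀ k ≤ B, F (G k) ≥ (1 - (1 - 1/(B:ℝ))^k) * F S := by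
    intro k hk
    have := main k hk
    have hring : (1 - (1 - 1/(B:ℝ))^k) * F S = F S - (1 - 1/(B:ℝ))^k * F S := by ring
    linarith [hring ▸ le_refl ((1 - (1 - 1/(B:ℝ))^k) * F S)]
  refine ⟨conc, ?_⟩
  have hB := conc B le_rfl
  have hexpb : (1 - 1/(B:ℝ))^B ≤ 1 / Real.exp 1 := by
    have h1 : 1 - 1/(B:ℝ) ≤ Real.exp (-(1/(B:ℝ))) := by
      have := Real.add_one_le_exp (-(1/(B:ℝ)))
      linarith
    have h2 : (1 - 1/(B:ℝ))^B ≤ (Real.exp (-(1/(B:ℝ))))^B :=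
      pow_le_pow_left₀ hq h1 B
    have h3 : (Real.exp (-(1/(B:ℝ))))^B = Real.exp ((B:ℝ) * (-(1/(B:ℝ)))) := by
      rw [← Real.exp_nat_mul]
    have h4 : (B:ℝ) * (-(1/(B:ℝ))) = -1 := by field_simp
    rw [h3, h4] at h2
    rw [Real.exp_neg, ← one_div] at h2
    exact h2
  have : (1 - 1 / Real.exp 1) * F S ≤ (1 - (1 - 1/(B:ℝ))^B) * F S := by
    apply mul_le_mul_of_nonneg_right _ hFS0
    linarith
  linarith
end

section
/- Let OPT > 0, B a positive integer, and let (g_k) be a nonnegative sequence with g_0 = 0 satisfying g_{k+1} − g_k ≥ (OPT − g_k)/B for all k ≥ 0. Then g_k ≥ (1 − (1 − 1/B)^k)·OPT for all k ≥ 0; in particular g_B ≥ (1 − 1/e)·OPT. -/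
theorem greedy_recurrence (OPT : ℝ) (hOPT : 0 < OPT)
    (B : ℕ) (hB : 0 < B)
    (g : ℕ → ℝ) (hg0 : g 0 = 0) (hgnn : ∀ k, 0 ≤ g k)
    (hrec : ∀ k, g (k + 1) - g k ≥ (OPT - g k) / B) :
    (∀ k, g k ≥ (1 - (1 - 1 / (B : ℝ)) ^ k) * OPT) ∧
    g B ≥ (1 - 1 / Real.exp 1) * OPT := by
  have hBpos : (0:ℝ) < B := by exact_mod_cast hB
  have hB1 : (1:ℝ) ≤ B := by exact_mod_cast hB
  have hmain : ∀ k, g k ≥ (1 - (1 - 1 / (B : ℝ)) ^ k) * OPT := by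
    intro k
    induction k with
    | zero => simp [hg0]
    | succ n ih =>
      have h := hrec n
      have hstep : g (n+1) ≥ g n * (1 - 1/(B:ℝ)) + OPT / B := by
        have h2 : g n * (1 - 1/(B:ℝ)) + OPT / B = g n + (OPT - g n) / B := by
          field_simp; ring
        rw [h2]; linarith
      have hco : (0:ℝ) ≤ 1 - 1/(B:ℝ) := by
        rw [sub_nonneg, div_le_one hBpos]; linarith
      calc g (n+1) ≥ g n * (1 - 1/(B:ℝ)) + OPT / B := hstep
        _ ≥ (1 - (1 - 1/(B:ℝ))^n) * OPT * (1 - 1/(B:ℝ)) + OPT / B := by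
            nlinarith [ih, mul_le_mul_of_nonneg_right ih hco]
        _ = (1 - (1 - 1/(B:ℝ))^(n+1)) * OPT := by
            ring
  refine ⟨hmain, ?_⟩
  have hpow : (1 - 1/(B:ℝ))^B ≤ 1 / Real.exp 1 := by
    have h1 : (1 - 1/(B:ℝ)) ≤ Real.exp (-(1/(B:ℝ))) := by
      have := Real.add_one_le_exp (-(1/(B:ℝ)))
      linarith
    have hco : (0:ℝ) ≤ 1 - 1/(B:ℝ) := by
      rw [sub_nonneg, div_le_one hBpos]; linarith
    calc (1 - 1/(B:ℝ))^B ≤ (Real.exp (-(1/(B:ℝ))))^B :=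
          pow_le_pow_left₀ hco h1 B
      _ = Real.exp (-(1/(B:ℝ)) * B) := by rw [← Real.exp_nat_mul]; ring_nf
      _ = 1 / Real.exp 1 := by
          rw [neg_mul, div_mul_cancel₀ _ (ne_of_gt hBpos), Real.exp_neg]
          simp [Real.exp_neg, one_div]
  have := hmain B
  nlinarith [this, hpow]
end
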